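/- Let F3 = [[1,0,0],[1,1,0],[0,1,1]] and G24 = F3 ⊗ F8. Let T2 be the 24×24 block matrix [[T,0,T],[0,I8,0],[0,0,I8]]. Then the rows of T2·G24 indexed by A2 = {2,3,4,8,12,14,15,16,20,22,23,24} generate the (24,12,8) extended Golay code given by [[G8',G8',G8'],[G8,G8,0],[0,G8,G8]]. -/

import Mathlib

open Matrix

/-- Generator matrix of the (8,4,4) Reed–Muller code. -/
def G8 : Matrix (Fin 4) (Fin 8) (ZMod 2) :=
  !![1,1,1,1,0,0,0,0; 1,1,0,0,1,1,0,0; 1,0,1,0,1,0,1,0; 1,1,1,1,1,1,1,1]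

/-- Column-permuted copy of G8 (permutation π3). -/
def G8' : Matrix (Fin 4) (Fin 8) (ZMod 2) :=
  !![0,1,1,1,1,0,0,0; 1,0,0,1,1,1,0,0; 1,1,0,0,1,0,1,0; 1,1,1,1,1,1,1,1]

/-- Assemble a 12×24 matrix from a 3×3 array of 4×8 blocks. -/
def build (M : Fin 3 → Fin 3 → Matrix (Fin 4) (Fin 8) (ZMod 2)) :
    Matrix (Fin 12) (Fin 24) (ZMod 2) :=
  Matrix.of fun i j =>
    M ⟨i.1 / 4, by have := i.2; omega⟩ ⟨j.1 / 8, by have := j.2; omega⟩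
      ⟨i.1 % 4, by omega⟩ ⟨j.1 % 8, by omega⟩

/-- Assemble a 24×24 matrix from a 3×3 array of 8×8 blocks. -/
def build8 (M : Fin 3 → Fin 3 → Matrix (Fin 8) (Fin 8) (ZMod 2)) :
    Matrix (Fin 24) (Fin 24) (ZMod 2) :=
  Matrix.of fun i j =>
    M ⟨i.1 / 8, by have := i.2; omega⟩ ⟨j.1 / 8, by have := j.2; omega⟩
      ⟨i.1 % 8, by omega⟩ ⟨j.1 % 8, by omega⟩

/-- The binary linear code generated by (the rows of) a matrix. -/
def code {k n : ℕ} (M : Matrix (Fin k) (Fin n) (ZMod 2)) :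
    Submodule (ZMod 2) (Fin n → ZMod 2) :=
  LinearMap.range M.vecMulLinear

/-- The cubing-construction generator matrix of the (24,12,8) extended Golay code. -/
def Ghat : Matrix (Fin 12) (Fin 24) (ZMod 2) :=
  build ![![G8, 0, G8], ![0, G8, G8], ![G8', G8', G8']]

/-- The 2×2 polar kernel. -/
def F2k : Matrix (Fin 2) (Fin 2) (ZMod 2) := !![1,0; 1,1]

/-- F8 = F2 ⊗ F2 ⊗ F2 (Kronecker product), written entrywise. -/
def F8 : Matrix (Fin 8) (Fin 8) (ZMod 2) :=
  Matrix.of fun i j =>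
    F2k ⟨i.1 / 4, by have := i.2; omega⟩ ⟨j.1 / 4, by have := j.2; omega⟩ *
    F2k ⟨i.1 / 2 % 2, by omega⟩ ⟨j.1 / 2 % 2, by omega⟩ *
    F2k ⟨i.1 % 2, by omega⟩ ⟨j.1 % 2, by omega⟩

/-- The 8×8 convolution matrix T of Proposition 1: identity plus extra ones at
(one-based) positions (2,3), (2,7), (3,4), (3,6), (4,5). -/
def T8 : Matrix (Fin 8) (Fin 8) (ZMod 2) :=
  Matrix.of fun i j =>
    if i = j ∨ (i = 1 ∧ j = 2) ∨ (i = 1 ∧ j = 6) ∨ (i = 2 ∧ j = 3) ∨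
       (i = 2 ∧ j = 5) ∨ (i = 3 ∧ j = 4) then 1 else 0

def F3b : Matrix (Fin 3) (Fin 3) (ZMod 2) := !![1,0,0; 1,1,0; 0,1,1]

/-- G24 = F3 ⊗ F8 for Kernel 2. -/
def G24b : Matrix (Fin 24) (Fin 24) (ZMod 2) :=
  Matrix.of fun i j =>
    F3b ⟨i.1 / 8, by have := i.2; omega⟩ ⟨j.1 / 8, by have := j.2; omega⟩ *
    F8 ⟨i.1 % 8, by omega⟩ ⟨j.1 % 8, by omega⟩

/-- T2 = [[T,0,T],[0,I8,0],[0,0,I8]]. -/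
def T2 : Matrix (Fin 24) (Fin 24) (ZMod 2) :=
  build8 ![![T8, 0, T8], ![0, 1, 0], ![0, 0, 1]]

set_option maxHeartbeats 40000000 in
private theorem rows_eq : ∀ k : Fin 12,
    (build ![![G8', G8', G8'], ![G8, G8, 0], ![0, G8, G8]]) k =
    (T2 * G24b) (![3, 2, 1, 7, 11, 13, 14, 15, 19, 21, 22, 23] k) := by
  intro k; funext j; revert k j
  exact @of_decide_eq_true _ (@Fintype.decidableForallFintype _ _ (fun _ => @Fintype.decidableForallFintype _ _
    (fun _ => inferInstanceAs (Decidable (@Eq (ZMod 2) _ _))) _) _) (by rfl)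

/-- The rows of T2·G24 indexed by A2 (one-based {2,3,4,8,12,14,15,16,20,22,23,24})
generate the extended Golay code [[G8',G8',G8'],[G8,G8,0],[0,G8,G8]]. -/

theorem kernel2_golay :
    Submodule.span (ZMod 2)
      ((fun i => (T2 * G24b) i) ''
        ({1, 2, 3, 7, 11, 13, 14, 15, 19, 21, 22, 23} : Set (Fin 24))) =
    code (build ![![G8', G8', G8'], ![G8, G8, 0], ![0, G8, G8]]) := by
  rw [code, range_vecMulLinear]
  congr 1
  ext v
  constructor
  · rintro ⟨i, hi, rfl⟩
    simp only [Set.mem_insert_iff, Set.mem_singleton_iff] at hi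
    rcases hi with rfl|rfl|rfl|rfl|rfl|rfl|rfl|rfl|rfl|rfl|rfl|rfl
    · exact ⟨2, rows_eq 2⟩
    · exact ⟨1, rows_eq 1⟩
    · exact ⟨0, rows_eq 0⟩
    · exact ⟨3, rows_eq 3⟩
    · exact ⟨4, rows_eq 4⟩
    · exact ⟨5, rows_eq 5⟩
    · exact ⟨6, rows_eq 6⟩
    · exact ⟨7, rows_eq 7⟩
    · exact ⟨8, rows_eq 8⟩
    · exact ⟨9, rows_eq 9⟩
    · exact ⟨10, rows_eq 10⟩
    · exact ⟨11, rows_eq 11⟩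
  · rintro ⟨k, rfl⟩
    fin_cases k
    · exact ⟨3, by simp, (rows_eq 0).symm⟩
    · exact ⟨2, by simp, (rows_eq 1).symm⟩
    · exact ⟨1, by simp, (rows_eq 2).symm⟩
    · exact ⟨7, by simp, (rows_eq 3).symm⟩
    · exact ⟨11, by simp, (rows_eq 4).symm⟩
    · exact ⟨13, by simp, (rows_eq 5).symm⟩
    · exact ⟨14, by simp, (rows_eq 6).symm⟩
    · exact ⟨15, by simp, (rows_eq 7).symm⟩
    · exact ⟨19, by simp, (rows_eq 8).symm⟩
    · exact ⟨21, by simp, (rows_eq 9).symm⟩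
    · exact ⟨22, by simp, (rows_eq 10).symm⟩
    · exact ⟨23, by simp, (rows_eq 11).symm⟩
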